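/- arXiv:0804.1361 — 4 statements merged into one kernel-verified Lean document; each statement's English description precedes it below -/
import Mathlib

section
/- Let C be a convex set in ℝ^d and let X_1, X_2, …, X_{d+1} be d+1 finite point sets in ℝ^d such that the convex hull of each X_i intersects C. Then there exist d+1 points x_1, x_2, …, x_{d+1} with x_i ∈ X_i for each i such that the convex hull of {x_1, x_2, …, x_{d+1}} intersects C. -/
open Metric Set

local notation "⟪" x ", " y "⟫" => @inner ℝ _ _ x y

/-- Characterization of a nearest point on a convex set: obtuse angles. -/
lemma proj_inner_le' {E : Type*} [NormedAddCommGroup E] [InnerProductSpace ℝ E]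
    {K : Set E} (hK : Convex ℝ K) {u v : E} (hv : v ∈ K)
    (hmin : ∀ w ∈ K, dist u v ≤ dist u w) :
    ∀ w ∈ K, ⟪u - v, w - v⟫ ≤ 0 := by
  haveI : Nonempty K := ⟨⟨v, hv⟩⟩
  apply (norm_eq_iInf_iff_real_inner_le_zero hK hv).1
  refine le_antisymm (le_ciInf fun w => ?_) (ciInf_le (⟨0, fun x ⟨w, h⟩ => h ▸ norm_nonneg _⟩ : BddBelow (Set.range fun w : K => ‖u - w‖)) ⟨v, hv⟩)
  rw [← dist_eq_norm, ← dist_eq_norm]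
  exact hmin w w.2

/-- A linear functional attains, on some point of `t`, a value at least its value at any
point of the convex hull of `t`. -/
lemma exists_inner_ge' {E : Type*} [NormedAddCommGroup E] [InnerProductSpace ℝ E]
    {t : Finset E} {z : E} (hz : z ∈ convexHull ℝ (t : Set E)) (u : E) :
    ∃ x ∈ t, ⟪u, z⟫ ≤ ⟪u, x⟫ := by
  have hne : t.Nonempty := by
    rcases t.eq_empty_or_nonempty with h | h
    · subst h; simp at hz
    · exact h
  obtain ⟨x, hx, hsup⟩ := t.exists_mem_eq_sup' hne (fun x => ⟪u, x⟫)
  refine ⟨x, hx, ?_⟩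
  have hlin : IsLinearMap ℝ (fun y : E => ⟪u, y⟫) :=
    ⟨fun a b => inner_add_right u a b, fun c a => real_inner_smul_right u a c⟩
  have hsubset : convexHull ℝ (t : Set E) ⊆ {y | ⟪u, y⟫ ≤ t.sup' hne fun x => ⟪u, x⟫} :=
    convexHull_min (fun y hy => Finset.le_sup' (fun x => ⟪u, x⟫) hy) (convex_halfSpace_le hlin _)
  have := hsubset hz
  simpa [← hsup] using this

/-- If `z` maximizes the linear functional `⟪u, ·⟫` over the hull of `t`, then `z` lies in
the hull of the points of `t` where the maximum is attained. -/
lemma mem_convexHull_face {E : Type*} [NormedAddCommGroup E] [InnerProductSpace ℝ E]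
    (u : E) {t : Finset E} {z : E} (hz : z ∈ convexHull ℝ (t : Set E))
    (hle : ∀ x ∈ t, ⟪u, x⟫ ≤ ⟪u, z⟫) :
    ∃ t' : Finset E, t' ⊆ t ∧ (∀ x ∈ t', ⟪u, x⟫ = ⟪u, z⟫) ∧
      z ∈ convexHull ℝ (t' : Set E) := by
  classical
  rw [Finset.convexHull_eq] at hz
  obtain ⟨w, hw0, hw1, hwz⟩ := hz
  have hzsum : z = ∑ x ∈ t, w x • x := by
    rw [← hwz, Finset.centerMass_eq_of_sum_1 _ _ hw1]; simp
  have hfz : ⟪u, z⟫ = ∑ x ∈ t, w x * ⟪u, x⟫ := by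
    rw [hzsum, inner_sum]
    exact Finset.sum_congr rfl fun x _ => real_inner_smul_right u x (w x)
  have hsum0 : ∑ x ∈ t, w x * (⟪u, z⟫ - ⟪u, x⟫) = 0 := by
    have : ∑ x ∈ t, w x * (⟪u, z⟫ - ⟪u, x⟫)
        = (∑ x ∈ t, w x) * ⟪u, z⟫ - ∑ x ∈ t, w x * ⟪u, x⟫ := by
      rw [Finset.sum_mul, ← Finset.sum_sub_distrib]
      exact Finset.sum_congr rfl fun x _ => by ring
    rw [this, hw1, hfz]; ring
  have hkey : ∀ x ∈ t, w x * (⟪u, z⟫ - ⟪u, x⟫) = 0 :=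
    (Finset.sum_eq_zero_iff_of_nonneg fun x hx =>
      mul_nonneg (hw0 x hx) (sub_nonneg.2 (hle x hx))).1 hsum0
  refine ⟨t.filter fun x => w x ≠ 0, Finset.filter_subset _ _, ?_, ?_⟩
  · intro x hx
    rw [Finset.mem_filter] at hx
    have := hkey x hx.1
    rcases mul_eq_zero.1 this with h | h
    · exact absurd h hx.2
    · linarith [sub_eq_zero.1 h]
  · have hcm : (t.filter fun x => w x ≠ 0).centerMass w id = z := by
      rw [Finset.centerMass_filter_ne_zero, hwz]
    rw [← hcm]
    refine Finset.centerMass_mem_convexHull _ (fun x hx => hw0 x (Finset.filter_subset _ _ hx))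
      ?_ (fun x hx => hx)
    rw [Finset.sum_filter_ne_zero, hw1]
    exact one_pos

/-- Carathéodory in a hyperplane: if all points of `t` lie on a hyperplane with normal
`u ≠ 0` in `ℝ^d`, any point of the hull of `t` is in the hull of at most `d` points of `t`. -/
lemma caratheodory_hyperplane {d : ℕ} {u : EuclideanSpace ℝ (Fin d)} (hu : u ≠ 0) {c : ℝ}
    {t : Finset (EuclideanSpace ℝ (Fin d))} (ht : ∀ x ∈ t, ⟪u, x⟫ = c)
    {z : EuclideanSpace ℝ (Fin d)} (hz : z ∈ convexHull ℝ (t : Set (EuclideanSpace ℝ (Fin d)))) :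
    ∃ t'' : Finset (EuclideanSpace ℝ (Fin d)), ↑t'' ⊆ (t : Set (EuclideanSpace ℝ (Fin d))) ∧
      t''.card ≤ d ∧ z ∈ convexHull ℝ (t'' : Set (EuclideanSpace ℝ (Fin d))) := by
  classical
  rw [convexHull_eq_union] at hz
  simp only [Set.mem_iUnion] at hz
  obtain ⟨t'', hsub, hai, hz'⟩ := hz
  refine ⟨t'', hsub, ?_, hz'⟩
  rcases t''.eq_empty_or_nonempty with h | hne
  · subst h; simp
  · have hcardpos : 0 < t''.card := Finset.card_pos.2 hne
    have hcard : Fintype.card t'' = (t''.card - 1) + 1 := by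
      rw [Fintype.card_coe]
      omega
    have hfr := hai.finrank_vectorSpan hcard
    set f : EuclideanSpace ℝ (Fin d) →ₗ[ℝ] ℝ := (innerSL ℝ u).toLinearMap with hf
    have hrange : Set.range ((↑) : t'' → EuclideanSpace ℝ (Fin d)) = (t'' : Set _) := by
      rw [Subtype.range_coe_subtype]; ext x; simp
    have hker : vectorSpan ℝ (Set.range ((↑) : t'' → EuclideanSpace ℝ (Fin d)))
        ≤ LinearMap.ker f := by
      rw [hrange, vectorSpan_def, Submodule.span_le]
      rintro v ⟨x, hx, y, hy, rfl⟩
      have hx' : ⟪u, x⟫ = c := ht x (hsub hx)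
      have hy' : ⟪u, y⟫ = c := ht y (hsub hy)
      simp only [SetLike.mem_coe, LinearMap.mem_ker, hf, ContinuousLinearMap.coe_coe,
        innerSL_apply_apply]
      show ⟪u, x - y⟫ = 0
      rw [inner_sub_right, hx', hy', sub_self]
    have hkerlt : Module.finrank ℝ (LinearMap.ker f) < d := by
      have hne_top : LinearMap.ker f ≠ ⊤ := by
        intro h
        have : f u = 0 := by rw [← LinearMap.mem_ker, h]; trivial
        have : ⟪u, u⟫ = 0 := this
        exact hu (inner_self_eq_zero.1 this)
      have := Submodule.finrank_lt hne_top
      rwa [finrank_euclideanSpace_fin] at this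
    have hle := Submodule.finrank_mono hker
    omega

theorem colorful_closed (d : ℕ) (C : Set (EuclideanSpace ℝ (Fin d))) (hC : Convex ℝ C)
    (hCcl : IsClosed C) (hCne : C.Nonempty)
    (X : Fin (d + 1) → Finset (EuclideanSpace ℝ (Fin d)))
    (hX : ∀ i, ((convexHull ℝ (X i : Set (EuclideanSpace ℝ (Fin d)))) ∩ C).Nonempty) :
    ∃ x : Fin (d + 1) → EuclideanSpace ℝ (Fin d), (∀ i, x i ∈ X i) ∧
      ((convexHull ℝ (Set.range x)) ∩ C).Nonempty := by
  classical
  have hXne : ∀ i, (X i).Nonempty := by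
    intro i
    obtain ⟨z, hz, -⟩ := hX i
    exact Finset.coe_nonempty.1 (convexHull_nonempty_iff.1 ⟨z, hz⟩)
  set T : Finset (Fin (d + 1) → EuclideanSpace ℝ (Fin d)) := Fintype.piFinset X with hT
  have TN : T.Nonempty :=
    ⟨fun i => (hXne i).choose, Fintype.mem_piFinset.2 fun i => (hXne i).choose_spec⟩
  have key : ∀ s : Fin (d + 1) → EuclideanSpace ℝ (Fin d),
      ∃ m ∈ convexHull ℝ (Set.range s),
        ∀ x ∈ convexHull ℝ (Set.range s), infDist m C ≤ infDist x C := by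
    intro s
    have hcomp : IsCompact (convexHull ℝ (Set.range s)) :=
      (Set.finite_range s).isCompact_convexHull ℝ
    have hne : (convexHull ℝ (Set.range s)).Nonempty :=
      ⟨s 0, subset_convexHull ℝ _ ⟨0, rfl⟩⟩
    obtain ⟨m, hm, hmin⟩ := hcomp.exists_isMinOn hne ((continuous_infDist_pt C).continuousOn)
    exact ⟨m, hm, fun x hx => hmin hx⟩
  choose a ha hmin using key
  obtain ⟨s₀, hs₀T, hs₀min⟩ := T.exists_min_image (fun s => infDist (a s) C) TN
  set a₀ := a s₀ with ha₀
  set D := infDist a₀ C with hD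
  by_cases hzero : D = 0
  · refine ⟨s₀, fun i => Fintype.mem_piFinset.1 hs₀T i, a₀, ha s₀, ?_⟩
    exact (hCcl.mem_iff_infDist_zero hCne).2 hzero
  · exfalso
    have hDpos : 0 < D := lt_of_le_of_ne infDist_nonneg (Ne.symm hzero)
    obtain ⟨b, hbC, hab⟩ := hCcl.exists_infDist_eq_dist hCne a₀
    have hdab : dist a₀ b = D := hab.symm
    set u := b - a₀ with hu
    have hnorm : ‖u‖ = D := by rw [hu, ← dist_eq_norm, dist_comm]; exact hdab
    have hune : u ≠ 0 := by
      intro h; rw [h, norm_zero] at hnorm; exact hzero hnorm.symm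
    -- a₀ is the nearest point to b in the hull of `range s₀`
    have hP1 : ∀ x ∈ convexHull ℝ (Set.range s₀), ⟪u, x - a₀⟫ ≤ 0 := by
      have hm : ∀ w ∈ convexHull ℝ (Set.range s₀), dist b a₀ ≤ dist b w := by
        intro w hw
        have h1 : D ≤ infDist w C := hmin s₀ w hw
        have h2 : infDist w C ≤ dist w b := infDist_le_dist_of_mem hbC
        rw [dist_comm b a₀, dist_comm b w]
        linarith [hdab]
      have h := proj_inner_le' (convex_convexHull ℝ _) (ha s₀) hm
      intro x hx
      exact h x hx
    -- b is the nearest point to a₀ in C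
    have hP2 : ∀ y ∈ C, ⟪a₀ - b, y - b⟫ ≤ 0 := by
      refine proj_inner_le' hC hbC (fun y hy => ?_)
      rw [hdab, hD]
      exact infDist_le_dist_of_mem hy
    -- the face where the functional ⟪u, ·⟫ is maximal
    set t : Finset (EuclideanSpace ℝ (Fin d)) := Finset.image s₀ Finset.univ with htdef
    have htcoe : (t : Set (EuclideanSpace ℝ (Fin d))) = Set.range s₀ := by
      simp [htdef]
    have hat : a₀ ∈ convexHull ℝ (t : Set (EuclideanSpace ℝ (Fin d))) := by
      rw [htcoe]; exact ha s₀
    have hle : ∀ x ∈ t, ⟪u, x⟫ ≤ ⟪u, a₀⟫ := by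
      intro x hx
      have hx' : x ∈ convexHull ℝ (Set.range s₀) := by
        rw [← htcoe]; exact subset_convexHull ℝ _ hx
      have := hP1 x hx'
      rw [inner_sub_right] at this
      linarith
    obtain ⟨t', ht'sub, ht'eq, hat'⟩ := mem_convexHull_face u hat hle
    obtain ⟨t'', ht''sub, ht''card, hat''⟩ := caratheodory_hyperplane hune ht'eq hat'
    -- choose a color not used by t''
    set g : EuclideanSpace ℝ (Fin d) → Fin (d + 1) :=
      fun x => if h : ∃ j, s₀ j = x then h.choose else 0 with hgdef
    have hg : ∀ x ∈ t'', s₀ (g x) = x := by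
      intro x hx
      have hx' : x ∈ t := ht'sub (ht''sub hx)
      rw [htdef, Finset.mem_image] at hx'
      obtain ⟨j, -, hj⟩ := hx'
      have hex : ∃ j, s₀ j = x := ⟨j, hj⟩
      simp only [hgdef, dif_pos hex]
      exact hex.choose_spec
    have hcard : (t''.image g).card < Fintype.card (Fin (d + 1)) := by
      have := Finset.card_image_le (s := t'') (f := g)
      simp only [Fintype.card_fin]
      omega
    obtain ⟨i, hi⟩ : ∃ i, i ∉ t''.image g := by
      by_contra h
      push_neg at h
      have : t''.image g = Finset.univ := Finset.eq_univ_iff_forall.2 h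
      rw [this, Finset.card_univ] at hcard
      exact lt_irrefl _ hcard
    -- a point of X i strictly on the other side
    obtain ⟨y, hyX, hyC⟩ := hX i
    have hyb : ⟪u, a₀⟫ + D ^ 2 ≤ ⟪u, y⟫ := by
      have h2 := hP2 y hyC
      have hab' : a₀ - b = -u := by rw [hu]; abel
      rw [hab', inner_neg_left, neg_nonpos] at h2
      have hb : b = a₀ + u := by rw [hu]; abel
      rw [inner_sub_right, hb, inner_add_right, real_inner_self_eq_norm_sq, hnorm] at h2
      linarith
    obtain ⟨xs, hxsX, hxs⟩ := exists_inner_ge' hyX u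
    have hxsgt : ⟪u, a₀⟫ + D ^ 2 ≤ ⟪u, xs⟫ := le_trans hyb hxs
    -- the improved selection
    set s₁ := Function.update s₀ i xs with hs₁
    have hs₁T : s₁ ∈ T := by
      refine Fintype.mem_piFinset.2 fun j => ?_
      by_cases h : j = i
      · subst h; simp only [hs₁, Function.update_self]; exact hxsX
      · rw [hs₁, Function.update_of_ne h]
        exact Fintype.mem_piFinset.1 hs₀T j
    have hsub'' : (t'' : Set (EuclideanSpace ℝ (Fin d))) ⊆ Set.range s₁ := by
      intro x hx
      have hx'' : x ∈ t'' := hx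
      have hgx : g x ≠ i := by
        intro h
        exact hi (h ▸ Finset.mem_image_of_mem g hx'')
      exact ⟨g x, by rw [hs₁, Function.update_of_ne hgx]; exact hg x hx''⟩
    have ha₀s₁ : a₀ ∈ convexHull ℝ (Set.range s₁) := convexHull_mono hsub'' hat''
    have hxss₁ : xs ∈ convexHull ℝ (Set.range s₁) :=
      subset_convexHull ℝ _ ⟨i, by rw [hs₁, Function.update_self]⟩
    have hxsa : xs ≠ a₀ := by
      intro h
      rw [h] at hxsgt
      nlinarith
    set r := ‖xs - a₀‖ with hr
    have hrpos : 0 < r := by rw [hr]; exact norm_sub_pos_iff.2 hxsa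
    set τ := min 1 (D ^ 2 / r ^ 2) with hτdef
    have hτpos : 0 < τ := lt_min one_pos (div_pos (pow_pos hDpos 2) (pow_pos hrpos 2))
    have hτ1 : τ ≤ 1 := min_le_left _ _
    set p := a₀ + τ • (xs - a₀) with hp
    have hpmem : p ∈ convexHull ℝ (Set.range s₁) := by
      have hcomb := (convex_convexHull ℝ (Set.range s₁)) ha₀s₁ hxss₁
        (sub_nonneg.2 hτ1) (le_of_lt hτpos) (by ring : (1 - τ) + τ = 1)
      have : p = (1 - τ) • a₀ + τ • xs := by rw [hp]; module
      rw [this]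
      exact hcomb
    have hpb : ‖p - b‖ ^ 2 ≤ D ^ 2 - τ * D ^ 2 := by
      have hpb' : p - b = τ • (xs - a₀) - u := by rw [hp, hu]; module
      rw [hpb', norm_sub_sq_real]
      have h1 : ‖τ • (xs - a₀)‖ ^ 2 = τ ^ 2 * r ^ 2 := by
        rw [norm_smul, Real.norm_eq_abs, abs_of_pos hτpos, hr]; ring
      have h2 : ⟪τ • (xs - a₀), u⟫ = τ * ⟪u, xs - a₀⟫ := by
        rw [real_inner_smul_left, real_inner_comm]
      have h3 : D ^ 2 ≤ ⟪u, xs - a₀⟫ := by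
        rw [inner_sub_right]; linarith
      have h4 : τ ^ 2 * r ^ 2 ≤ τ * D ^ 2 := by
        have hτr : τ ≤ D ^ 2 / r ^ 2 := min_le_right _ _
        have : τ * r ^ 2 ≤ D ^ 2 := (le_div_iff₀ (pow_pos hrpos 2)).1 hτr
        calc τ ^ 2 * r ^ 2 = τ * (τ * r ^ 2) := by ring
          _ ≤ τ * D ^ 2 := mul_le_mul_of_nonneg_left this (le_of_lt hτpos)
      rw [h1, h2, hnorm]
      nlinarith
    have hlt : dist p b < D := by
      have h5 : dist p b ^ 2 < D ^ 2 := by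
        rw [dist_eq_norm]
        nlinarith [mul_pos hτpos (pow_pos hDpos 2)]
      exact lt_of_pow_lt_pow_left₀ 2 (le_of_lt hDpos) h5
    have hc1 : D ≤ infDist (a s₁) C := hs₀min s₁ hs₁T
    have hc2 : infDist (a s₁) C ≤ infDist p C := hmin s₁ p hpmem
    have hc3 : infDist p C ≤ dist p b := infDist_le_dist_of_mem hbC
    linarith

theorem colorful_euclidean (d : ℕ) (C : Set (EuclideanSpace ℝ (Fin d))) (hC : Convex ℝ C)
    (X : Fin (d + 1) → Finset (EuclideanSpace ℝ (Fin d)))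
    (hX : ∀ i, ((convexHull ℝ (X i : Set (EuclideanSpace ℝ (Fin d)))) ∩ C).Nonempty) :
    ∃ x : Fin (d + 1) → EuclideanSpace ℝ (Fin d), (∀ i, x i ∈ X i) ∧
      ((convexHull ℝ (Set.range x)) ∩ C).Nonempty := by
  classical
  set y : Fin (d + 1) → EuclideanSpace ℝ (Fin d) := fun i => (hX i).choose with hy
  have hy1 : ∀ i, y i ∈ convexHull ℝ (X i : Set (EuclideanSpace ℝ (Fin d))) :=
    fun i => (hX i).choose_spec.1
  have hy2 : ∀ i, y i ∈ C := fun i => (hX i).choose_spec.2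
  set C' : Set (EuclideanSpace ℝ (Fin d)) := convexHull ℝ (Set.range y) with hC'
  have hC'C : C' ⊆ C := convexHull_min (Set.range_subset_iff.2 hy2) hC
  have hC'cl : IsClosed C' := ((Set.finite_range y).isCompact_convexHull ℝ).isClosed
  have hC'ne : C'.Nonempty := ⟨y 0, subset_convexHull ℝ _ ⟨0, rfl⟩⟩
  have hX' : ∀ i, ((convexHull ℝ (X i : Set (EuclideanSpace ℝ (Fin d)))) ∩ C').Nonempty :=
    fun i => ⟨y i, hy1 i, subset_convexHull ℝ _ ⟨i, rfl⟩⟩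
  obtain ⟨x, hx1, z, hz1, hz2⟩ :=
    colorful_closed d C' (convex_convexHull ℝ _) hC'cl hC'ne X hX'
  exact ⟨x, hx1, z, hz1, hC'C hz2⟩

/-- Colorful Carathéodory theorem, version with a convex set `C`:
if the convex hull of each of the `d+1` finite point sets `X i` intersects `C`,
then one can pick one point `x i` from each `X i` so that the convex hull of the
chosen points intersects `C`. -/
theorem colorful_caratheodory_convex_set (d : ℕ)
    (C : Set (Fin d → ℝ)) (hC : Convex ℝ C)
    (X : Fin (d + 1) → Finset (Fin d → ℝ))
    (hX : ∀ i, ((convexHull ℝ (X i : Set (Fin d → ℝ))) ∩ C).Nonempty) :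
    ∃ x : Fin (d + 1) → (Fin d → ℝ), (∀ i, x i ∈ X i) ∧
      ((convexHull ℝ (Set.range x)) ∩ C).Nonempty := by
  classical
  let e : (Fin d → ℝ) ≃ₗ[ℝ] EuclideanSpace ℝ (Fin d) := (WithLp.linearEquiv 2 ℝ (Fin d → ℝ)).symm
  have hC' : Convex ℝ (e '' C) := hC.linear_image e.toLinearMap
  have hX' : ∀ i, ((convexHull ℝ (((X i).image e : Finset _) : Set (EuclideanSpace ℝ (Fin d))))
      ∩ e '' C).Nonempty := by
    intro i
    obtain ⟨z, hz1, hz2⟩ := hX i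
    refine ⟨e z, ?_, z, hz2, rfl⟩
    have h := e.toLinearMap.image_convexHull (X i : Set (Fin d → ℝ))
    rw [LinearEquiv.coe_coe] at h
    rw [Finset.coe_image, ← h]
    exact ⟨z, hz1, rfl⟩
  obtain ⟨x, hx1, z, hz1, hz2⟩ := colorful_euclidean d (e '' C) hC' (fun i => (X i).image e) hX'
  refine ⟨fun i => e.symm (x i), fun i => ?_, e.symm z, ?_, ?_⟩
  · obtain ⟨a, ha, hax⟩ := Finset.mem_image.1 (hx1 i)
    show e.symm (x i) ∈ X i
    rw [← hax]; simpa using ha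
  · have h := e.symm.toLinearMap.image_convexHull (Set.range x)
    rw [LinearEquiv.coe_coe, ← Set.range_comp] at h
    change e.symm z ∈ convexHull ℝ (Set.range (e.symm ∘ x))
    rw [← h]
    exact ⟨z, hz1, rfl⟩
  · obtain ⟨c, hc, rfl⟩ := hz2
    simpa using hc
end

section
/- Max-plus colorful Carathéodory theorem: let X_1, X_2, …, X_{d+1} be d+1 finite point sets in (Fin d → EReal) and let p be a point such that the max-plus convex hull of each X_i contains p. Then there exist d+1 points x_1, x_2, …, x_{d+1} with x_i ∈ X_i for each i, such that the max-plus convex hull of {x_1, x_2, …, x_{d+1}} contains p. -/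
def mpHull {d : ℕ} (X : Finset (Fin d → EReal)) : Set (Fin d → EReal) :=
  {p | ∃ lam : (Fin d → EReal) → EReal,
      X.sup lam = 0 ∧ ∀ k, p k = X.sup fun y => lam y + y k}

/-- Max-plus colorful Carathéodory theorem. -/
theorem maxPlus_colorful_caratheodory (d : ℕ)
    (X : Fin (d + 1) → Finset (Fin d → EReal)) (p : Fin d → EReal)
    (hX : ∀ i, p ∈ mpHull (X i)) :
    ∃ x : Fin (d + 1) → (Fin d → EReal), (∀ i, x i ∈ X i) ∧
      p ∈ mpHull (Finset.image x Finset.univ) := by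
  choose lam hsup hp using hX
  have hne : ∀ i, (X i).Nonempty := by
    intro i
    rcases (X i).eq_empty_or_nonempty with h | h
    · exfalso
      have := hsup i
      rw [h, Finset.sup_empty] at this
      exact absurd this (by simp)
    · exact h
  have hx : ∀ i : Fin (d+1), ∃ y ∈ X i, (∀ k, lam i y + y k ≤ p k) ∧
      (∀ h : (i:ℕ) < d, lam i y + y ⟨i, h⟩ = p ⟨i, h⟩) ∧
      ((i:ℕ) = d → lam i y = 0) := by
    intro i
    by_cases h : (i:ℕ) < d
    · obtain ⟨y, hy, hy2⟩ := Finset.exists_mem_eq_sup (X i) (hne i)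
        (fun y => lam i y + y ⟨i, h⟩)
      refine ⟨y, hy, ?_, ?_, ?_⟩
      · intro k; rw [hp i k]; exact Finset.le_sup (f := fun y => lam i y + y k) hy
      · intro h'; rw [hp i ⟨i, h'⟩]; exact hy2.symm
      · intro hd; omega
    · obtain ⟨y, hy, hy2⟩ := Finset.exists_mem_eq_sup (X i) (hne i) (lam i)
      refine ⟨y, hy, ?_, fun h' => absurd h' h, fun _ => by rw [← hy2, hsup i]⟩
      intro k; rw [hp i k]; exact Finset.le_sup (f := fun y => lam i y + y k) hy
  choose x hmem hle hcoord hlast using hx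
  set μ : Fin (d+1) → EReal := fun i => lam i (x i) with hμ
  have hμle : ∀ i, μ i ≤ 0 := fun i => by
    rw [← hsup i]; exact Finset.le_sup (hmem i)
  set Lam : (Fin d → EReal) → EReal :=
    fun y => Finset.univ.sup (fun i => if x i = y then μ i else ⊥) with hLam
  refine ⟨x, hmem, Lam, ?_, ?_⟩
  · apply le_antisymm
    · apply Finset.sup_le
      intro y _
      apply Finset.sup_le
      intro i _
      split
      · exact hμle i
      · exact bot_le
    · have h1 : μ (Fin.last d) = 0 := hlast (Fin.last d) rfl
      calc (0:EReal) = μ (Fin.last d) := h1.symm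
        _ ≤ Lam (x (Fin.last d)) := by
            apply Finset.le_sup_of_le (Finset.mem_univ (Fin.last d)); simp
        _ ≤ _ := Finset.le_sup (f := Lam) (Finset.mem_image_of_mem x (Finset.mem_univ _))
  · intro k
    apply le_antisymm
    · have hk : ((Fin.castSucc k : Fin (d+1)) : ℕ) < d := by simp [k.isLt]
      have hkk : (⟨((Fin.castSucc k : Fin (d+1)) : ℕ), hk⟩ : Fin d) = k := by
        apply Fin.ext; simp
      have h2 : μ (Fin.castSucc k) + x (Fin.castSucc k) k = p k := by
        have := hcoord (Fin.castSucc k) hk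
        rwa [hkk] at this
      calc p k = μ (Fin.castSucc k) + x (Fin.castSucc k) k := h2.symm
        _ ≤ Lam (x (Fin.castSucc k)) + x (Fin.castSucc k) k := by
            refine add_le_add ?_ le_rfl
            apply Finset.le_sup_of_le (Finset.mem_univ (Fin.castSucc k)); simp
        _ ≤ _ := Finset.le_sup (f := fun y => Lam y + y k) (Finset.mem_image_of_mem x (Finset.mem_univ _))
    · apply Finset.sup_le
      intro y _
      obtain ⟨i, _, hi⟩ := Finset.exists_mem_eq_sup Finset.univ Finset.univ_nonempty
        (fun i => if x i = y then μ i else ⊥)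
      show Lam y + y k ≤ p k
      rw [hLam]
      simp only []
      rw [hi]
      split
      · next hxy => rw [← hxy]; exact hle i k
      · simp
end

section
/- Let G be a bipartite graph with finite color classes U and W, with no isolated vertices, and let q be a positive integer. If |U| ≥ (q-1)|W| + 1, then there exist q pairwise disjoint nonempty subsets U_1, …, U_q of U with N(U_1) = N(U_2) = … = N(U_q). Moreover, there is a subset S ⊆ W such that the number of distinct unordered families {U_1, …, U_q} of q pairwise disjoint nonempty subsets of U satisfying N(U_i) = S for all i is at least ((q-1)!)^{|S| - 1}. -/
open Finset
open scoped Classical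

lemma ext_aux {U W : Type*} [Fintype U] [DecidableEq U] [DecidableEq W] (q : ℕ)
    (A B : W → Finset U) (S : Finset W)
    (hBA : ∀ s ∈ S, B s ⊆ A s)
    (hBcard : ∀ s ∈ S, (B s).card = q - 1)
    (hBdisj : ∀ s ∈ S, ∀ s' ∈ S, s ≠ s' → Disjoint (B s) (B s'))
    (hns : ∀ R, R ⊆ S → R.Nonempty → ∃ u ∈ R.biUnion A, u ∉ R.biUnion B) :
    ∀ n (R : Finset W), R.card = n → R ⊆ S → ∀ c₀ : U → Fin q,
      (q-1).factorial ^ n ≤ (Finset.univ.filter (fun c : U → Fin q =>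
        (∀ u, u ∉ R.biUnion B → c u = c₀ u) ∧
        ∀ s ∈ R, ∀ j : Fin q, ∃ u ∈ A s, c u = j)).card := by
  intro n
  induction n with
  | zero =>
    intro R hR0 hRS c₀
    have hR : R = ∅ := Finset.card_eq_zero.mp hR0
    subst hR
    simp only [pow_zero]
    apply Finset.card_pos.mpr
    refine ⟨c₀, ?_⟩
    simp
  | succ n ih =>
    intro R hRcard hRS c₀
    have hRne : R.Nonempty := Finset.card_pos.mp (by omega)
    obtain ⟨t, htA, htB⟩ := hns R hRS hRne
    obtain ⟨sstar, hsR, htAs⟩ := Finset.mem_biUnion.mp htA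
    set jstar : Fin q := c₀ t with hjstar
    set R' : Finset W := R.erase sstar with hR'
    have hR'S : R' ⊆ S := (Finset.erase_subset _ _).trans hRS
    have hR'card : R'.card = n := by
      rw [hR', Finset.card_erase_of_mem hsR]; omega
    -- vertices of B sstar are not in R'.biUnion B
    have hBnotR' : ∀ u ∈ B sstar, u ∉ R'.biUnion B := by
      intro u hu hmem
      obtain ⟨s', hs', hus'⟩ := Finset.mem_biUnion.mp hmem
      have hne : sstar ≠ s' := by
        intro h; rw [hR'] at hs'; exact (Finset.ne_of_mem_erase hs') h.symm
      exact (Finset.disjoint_left.mp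
        (hBdisj sstar (hRS hsR) s' (hR'S hs') hne)) hu hus'
    have htnotB : ∀ s ∈ R, t ∉ B s := by
      intro s hs hts
      exact htB (Finset.mem_biUnion.mpr ⟨s, hs, hts⟩)
    have htnotR' : t ∉ R'.biUnion B := by
      intro h
      obtain ⟨s', hs', hts'⟩ := Finset.mem_biUnion.mp h
      exact htnotB s' (Finset.erase_subset _ _ hs') hts'
    set T : Finset (Fin q) := Finset.univ.erase jstar with hT
    have hcards : Fintype.card (↥(B sstar)) = Fintype.card (↥T) := by
      rw [Fintype.card_coe, Fintype.card_coe, hBcard sstar (hRS hsR), hT,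
        Finset.card_erase_of_mem (Finset.mem_univ _), Finset.card_univ,
        Fintype.card_fin]
    -- the modified base colorings
    set c₁ : (↥(B sstar) ≃ ↥T) → U → Fin q := fun e u =>
      if h : u ∈ B sstar then ((e ⟨u, h⟩ : ↥T) : Fin q) else c₀ u with hc₁
    set 𝒞 : Finset W → (U → Fin q) → Finset (U → Fin q) := fun R c₀ =>
      (Finset.univ.filter (fun c : U → Fin q =>
        (∀ u, u ∉ R.biUnion B → c u = c₀ u) ∧
        ∀ s ∈ R, ∀ j : Fin q, ∃ u ∈ A s, c u = j)) with h𝒞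
    have hsub : ∀ e : (↥(B sstar) ≃ ↥T), 𝒞 R' (c₁ e) ⊆ 𝒞 R c₀ := by
      intro e c hc
      rw [h𝒞, Finset.mem_filter] at hc ⊢
      obtain ⟨-, h1, h2⟩ := hc
      refine ⟨Finset.mem_univ _, ?_, ?_⟩
      · intro u hu
        have hu' : u ∉ R'.biUnion B := by
          intro h; exact hu (Finset.biUnion_subset_biUnion_of_subset_left _
            (Finset.erase_subset _ _) h)
        have husstar : u ∉ B sstar := by
          intro h; exact hu (Finset.mem_biUnion.mpr ⟨sstar, hsR, h⟩)
        rw [h1 u hu', hc₁]; simp [husstar]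
      · intro s hs j
        by_cases hss : s = sstar
        · subst hss
          by_cases hj : j = jstar
          · refine ⟨t, htAs, ?_⟩
            rw [h1 t htnotR', hc₁]
            simp only [dif_neg (htnotB s hsR)]
            rw [hj]
          · have hjT : j ∈ T := by
              rw [hT]; exact Finset.mem_erase.mpr ⟨hj, Finset.mem_univ _⟩
            set u : ↥(B s) := e.symm ⟨j, hjT⟩ with hu
            refine ⟨u.1, hBA s (hRS hsR) u.2, ?_⟩
            rw [h1 u.1 (hBnotR' u.1 u.2), hc₁]
            simp only [dif_pos u.2]
            have : (⟨u.1, u.2⟩ : ↥(B s)) = u := rfl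
            rw [this, hu, e.apply_symm_apply]
        · exact h2 s (Finset.mem_erase.mpr ⟨hss, hs⟩) j
    have hdisj : ∀ e ∈ (Finset.univ : Finset (↥(B sstar) ≃ ↥T)),
        ∀ e' ∈ (Finset.univ : Finset (↥(B sstar) ≃ ↥T)), e ≠ e' →
        Disjoint (𝒞 R' (c₁ e)) (𝒞 R' (c₁ e')) := by
      intro e _ e' _ hee
      rw [Finset.disjoint_left]
      intro c hc hc'
      apply hee
      apply Equiv.ext
      intro x
      rw [h𝒞, Finset.mem_filter] at hc hc'
      have h1 := hc.2.1 x.1 (hBnotR' x.1 x.2)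
      have h2 := hc'.2.1 x.1 (hBnotR' x.1 x.2)
      rw [h1] at h2
      rw [hc₁] at h2
      simp only [dif_pos x.2] at h2
      have hx : (⟨x.1, x.2⟩ : ↥(B sstar)) = x := rfl
      rw [hx] at h2
      exact Subtype.ext h2
    have hbig : (Finset.univ : Finset (↥(B sstar) ≃ ↥T)).biUnion
        (fun e => 𝒞 R' (c₁ e)) ⊆ 𝒞 R c₀ :=
      Finset.biUnion_subset.mpr (fun e _ => hsub e)
    have hcardE : (Finset.univ : Finset (↥(B sstar) ≃ ↥T)).card = (q-1).factorial := by
      rw [Finset.card_univ, Fintype.card_equiv (Fintype.equivOfCardEq hcards),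
        Fintype.card_coe, hBcard sstar (hRS hsR)]
    calc (q-1).factorial ^ (n+1)
        = (Finset.univ : Finset (↥(B sstar) ≃ ↥T)).card * (q-1).factorial ^ n := by
          rw [hcardE, pow_succ, mul_comm]
      _ ≤ ∑ e ∈ (Finset.univ : Finset (↥(B sstar) ≃ ↥T)), (𝒞 R' (c₁ e)).card := by
          have := Finset.card_nsmul_le_sum (Finset.univ : Finset (↥(B sstar) ≃ ↥T))
            (fun e => (𝒞 R' (c₁ e)).card) ((q-1).factorial ^ n)
            (fun e _ => ih R' hR'card hR'S (c₁ e))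
          simpa [smul_eq_mul] using this
      _ = ((Finset.univ : Finset (↥(B sstar) ≃ ↥T)).biUnion (fun e => 𝒞 R' (c₁ e))).card :=
          (Finset.card_biUnion hdisj).symm
      _ ≤ (𝒞 R c₀).card := Finset.card_le_card hbig
/-- Tverberg-type theorem for bipartite graphs: if a bipartite graph with finite
color classes `U`, `W` (adjacency `r`) has no isolated vertices and
`|U| ≥ (q-1)|W| + 1`, then there are `q` pairwise disjoint nonempty subsets of
`U` with equal neighborhoods; moreover, for some common neighborhood `S ⊆ W`,
the number of distinct unordered families of `q` such subsets, all with
neighborhood exactly `S`, is at least `((q-1)!)^(|S|-1)`. -/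
theorem bipartite_tverberg (U W : Type*) [Fintype U] [Fintype W]
    (r : U → W → Prop)
    (hU : ∀ u : U, ∃ w : W, r u w) (hW : ∀ w : W, ∃ u : U, r u w)
    (q : ℕ) (hq : 1 ≤ q)
    (hcard : (q - 1) * Fintype.card W + 1 ≤ Fintype.card U) :
    (∃ Us : Fin q → Finset U, (∀ i, (Us i).Nonempty) ∧
        Pairwise (Function.onFun Disjoint Us) ∧
        ∀ i j, {w : W | ∃ u ∈ Us i, r u w} = {w : W | ∃ u ∈ Us j, r u w}) ∧
      ∃ S : Set W,
        ((q - 1).factorial) ^ (S.ncard - 1) ≤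
          {F : Finset (Finset U) |
            F.card = q ∧
            (∀ A ∈ F, A.Nonempty) ∧
            (∀ A ∈ F, ∀ B ∈ F, A ≠ B → Disjoint A B) ∧
            ∀ A ∈ F, {w : W | ∃ u ∈ A, r u w} = S}.ncard := by
  classical
  -- the set of vertices whose neighborhood is contained in T
  set UT : Finset W → Finset U := fun T => Finset.univ.filter (fun u => ∀ w, r u w → w ∈ T)
    with hUT
  have hUTuniv : (q - 1) * (Finset.univ : Finset W).card + 1 ≤ (UT Finset.univ).card := by
    have h1 : UT Finset.univ = Finset.univ := by
      apply Finset.eq_univ_iff_forall.mpr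
      intro u; simp [hUT]
    rw [h1, Finset.card_univ, Finset.card_univ]
    exact hcard
  -- a minimal `S`
  obtain ⟨S, hSC, hSmin⟩ := Finset.exists_min_image
    ((Finset.univ : Finset (Finset W)).filter (fun T => (q-1)*T.card + 1 ≤ (UT T).card))
    Finset.card
    ⟨Finset.univ, Finset.mem_filter.mpr ⟨Finset.mem_univ _, hUTuniv⟩⟩
  have hS : (q-1)*S.card + 1 ≤ (UT S).card := (Finset.mem_filter.mp hSC).2
  have hmin : ∀ T : Finset W, T.card < S.card → (UT T).card ≤ (q-1)*T.card := by
    intro T hT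
    by_contra h
    push_neg at h
    have h2 : S.card ≤ T.card :=
      hSmin T (Finset.mem_filter.mpr ⟨Finset.mem_univ _, by omega⟩)
    omega
  set X : Finset U := UT S with hXdef
  have hXmem : ∀ u, u ∈ X ↔ ∀ w, r u w → w ∈ S := by
    intro u; simp [hXdef, hUT]
  have hXcard : (q-1)*S.card + 1 ≤ X.card := hS
  have hXne : X.Nonempty := Finset.card_pos.mp (by omega)
  have hSne : S.Nonempty := by
    obtain ⟨u, hu⟩ := hXne
    obtain ⟨w, hw⟩ := hU u
    exact ⟨w, (hXmem u).mp hu w hw⟩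
  have hScard1 : 1 ≤ S.card := Finset.card_pos.mpr hSne
  set A : W → Finset U := fun s => X.filter (fun u => r u s) with hA
  have hAX : ∀ s, A s ⊆ X := fun s => Finset.filter_subset _ _
  -- Hall-type surplus condition
  have hsurplus : ∀ R, R ⊆ S → R.Nonempty → (q-1)*R.card + 1 ≤ (R.biUnion A).card := by
    intro R hRS hRne
    have hsub : X ⊆ R.biUnion A ∪ UT (S \ R) := by
      intro u hu
      by_cases h : ∃ s ∈ R, r u s
      · obtain ⟨s, hs, hrs⟩ := h
        exact Finset.mem_union_left _
          (Finset.mem_biUnion.mpr ⟨s, hs, Finset.mem_filter.mpr ⟨hu, hrs⟩⟩)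
      · push_neg at h
        apply Finset.mem_union_right
        simp only [hUT, Finset.mem_filter]
        exact ⟨Finset.mem_univ _, fun w hw => Finset.mem_sdiff.mpr
          ⟨(hXmem u).mp hu w hw, fun hwR => h w hwR hw⟩⟩
    have h1 : X.card ≤ (R.biUnion A).card + (UT (S \ R)).card :=
      (Finset.card_le_card hsub).trans (Finset.card_union_le _ _)
    have hRcard : R.card ≤ S.card := Finset.card_le_card hRS
    have hsd : (S \ R).card = S.card - R.card := Finset.card_sdiff_of_subset hRS
    have hlt : (S \ R).card < S.card := by
      have : 1 ≤ R.card := Finset.card_pos.mpr hRne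
      omega
    have h2 := hmin _ hlt
    rw [hsd] at h2
    have hmul : (q-1)*(S.card - R.card) + (q-1)*R.card = (q-1)*S.card := by
      rw [← Nat.mul_add, Nat.sub_add_cancel hRcard]
    have h3 : (q-1)*S.card + 1 ≤ (R.biUnion A).card + (q-1)*(S.card - R.card) := by
      calc (q-1)*S.card + 1 ≤ X.card := hXcard
        _ ≤ (R.biUnion A).card + (UT (S \ R)).card := h1
        _ ≤ (R.biUnion A).card + (q-1)*(S.card - R.card) := Nat.add_le_add_left h2 _
    rw [← hmul] at h3
    linarith
  -- Hall's theorem to get the private neighbor sets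
  have hall_cond : ∀ (I : Finset ({x // x ∈ S} × Fin (q-1))),
      I.card ≤ (I.biUnion (fun p => A p.1.1)).card := by
    intro I
    rcases I.eq_empty_or_nonempty with hI | hI
    · simp [hI]
    · set J : Finset {x // x ∈ S} := I.image Prod.fst with hJ
      set J' : Finset W := J.image Subtype.val with hJ'
      have hJ'S : J' ⊆ S := by
        intro s hs
        obtain ⟨x, -, rfl⟩ := Finset.mem_image.mp hs
        exact x.2
      have hJ'ne : J'.Nonempty := by
        obtain ⟨p, hp⟩ := hI
        exact ⟨p.1.1, Finset.mem_image.mpr ⟨p.1, Finset.mem_image.mpr ⟨p, hp, rfl⟩, rfl⟩⟩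
      have hbieq : I.biUnion (fun p => A p.1.1) = J'.biUnion A := by
        ext u
        constructor
        · intro hu
          obtain ⟨p, hp, hup⟩ := Finset.mem_biUnion.mp hu
          exact Finset.mem_biUnion.mpr ⟨p.1.1,
            Finset.mem_image.mpr ⟨p.1, Finset.mem_image.mpr ⟨p, hp, rfl⟩, rfl⟩, hup⟩
        · intro hu
          obtain ⟨s, hs, hus⟩ := Finset.mem_biUnion.mp hu
          obtain ⟨x, hx, rfl⟩ := Finset.mem_image.mp hs
          obtain ⟨p, hp, rfl⟩ := Finset.mem_image.mp hx
          exact Finset.mem_biUnion.mpr ⟨p, hp, hus⟩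
      have hIcard : I.card ≤ (q-1) * J'.card := by
        have hsub : I ⊆ J ×ˢ (Finset.univ : Finset (Fin (q-1))) := by
          intro p hp
          exact Finset.mem_product.mpr ⟨Finset.mem_image_of_mem _ hp, Finset.mem_univ _⟩
        have h4 := Finset.card_le_card hsub
        rw [Finset.card_product, Finset.card_univ, Fintype.card_fin] at h4
        have h5 : J'.card = J.card := Finset.card_image_of_injective _ Subtype.val_injective
        rw [h5, mul_comm]
        exact h4
      have h6 := hsurplus J' hJ'S hJ'ne
      rw [hbieq]
      linarith
  obtain ⟨f, hfinj, hfmem⟩ :=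
    (Finset.all_card_le_biUnion_card_iff_exists_injective
      (fun p : {x // x ∈ S} × Fin (q-1) => A p.1.1)).mp hall_cond
  set B : W → Finset U := fun s =>
    if h : s ∈ S then Finset.image (fun i : Fin (q-1) => f (⟨s, h⟩, i)) Finset.univ else ∅
    with hB
  have hBA : ∀ s ∈ S, B s ⊆ A s := by
    intro s hs u hu
    rw [hB] at hu
    simp only [dif_pos hs, Finset.mem_image] at hu
    obtain ⟨i, -, rfl⟩ := hu
    exact hfmem (⟨s, hs⟩, i)
  have hBcards : ∀ s ∈ S, (B s).card = q - 1 := by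
    intro s hs
    rw [hB]
    simp only [dif_pos hs]
    rw [Finset.card_image_of_injective _ (fun i i' h => by
      have h2 := hfinj h
      exact (Prod.ext_iff.mp h2).2)]
    simp
  have hBdisj : ∀ s ∈ S, ∀ s' ∈ S, s ≠ s' → Disjoint (B s) (B s') := by
    intro s hs s' hs' hne
    rw [Finset.disjoint_left]
    intro u hu hu'
    rw [hB] at hu hu'
    simp only [dif_pos hs] at hu
    simp only [dif_pos hs'] at hu'
    obtain ⟨i, -, hi⟩ := Finset.mem_image.mp hu
    obtain ⟨i', -, hi'⟩ := Finset.mem_image.mp hu'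
    have h2 := hfinj (hi.trans hi'.symm)
    have h3 := congrArg Prod.fst h2
    exact hne (congrArg Subtype.val h3)
  -- the non-stuck condition
  have hns : ∀ R, R ⊆ S → R.Nonempty → ∃ u ∈ R.biUnion A, u ∉ R.biUnion B := by
    intro R hRS hRne
    have hBcard : (R.biUnion B).card = (q-1) * R.card := by
      rw [Finset.card_biUnion (fun s hs s' hs' h => hBdisj s (hRS hs) s' (hRS hs') h)]
      rw [Finset.sum_congr rfl (fun s hs => hBcards s (hRS hs)), Finset.sum_const,
        smul_eq_mul, mul_comm]
    have hAcard := hsurplus R hRS hRne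
    by_contra h
    push_neg at h
    have hsub : R.biUnion A ⊆ R.biUnion B := fun u hu => h u hu
    have h2 := Finset.card_le_card hsub
    rw [hBcard] at h2
    linarith
  obtain ⟨x, hxA, hxB⟩ := hns S (Finset.Subset.refl S) hSne
  have hxX : x ∈ X := by
    obtain ⟨s, hs, hx⟩ := Finset.mem_biUnion.mp hxA
    exact hAX s hx
  set z : Fin q := ⟨0, hq⟩ with hz
  set c0 : Fin q → U → Fin q := fun j u => if u = x then j else z with hc0
  -- the families of colorings
  obtain ⟨𝒞, h𝒞card, h𝒞mem⟩ : ∃ 𝒞 : Fin q → Finset (U → Fin q),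
      (∀ j, (q-1).factorial ^ S.card ≤ (𝒞 j).card) ∧
      (∀ j c, c ∈ 𝒞 j ↔ ((∀ u, u ∉ S.biUnion B → c u = c0 j u) ∧
        ∀ s ∈ S, ∀ jj : Fin q, ∃ u ∈ A s, c u = jj)) := by
    refine ⟨fun j => _, fun j => ext_aux q A B S hBA hBcards hBdisj hns S.card S rfl
      (Finset.Subset.refl S) (c0 j), fun j c => ?_⟩
    simp [Finset.mem_filter]
  set V : Finset (U → Fin q) := (Finset.univ : Finset (Fin q)).biUnion 𝒞 with hV
  have hVrainbow : ∀ c ∈ V, ∀ s ∈ S, ∀ jj : Fin q, ∃ u ∈ A s, c u = jj := by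
    intro c hc
    obtain ⟨j, -, hcj⟩ := Finset.mem_biUnion.mp hc
    exact ((h𝒞mem j c).mp hcj).2
  have hVoff : ∀ c ∈ V, ∀ u, u ∉ X → c u = z := by
    intro c hc u hu
    obtain ⟨j, -, hcj⟩ := Finset.mem_biUnion.mp hc
    have hub : u ∉ S.biUnion B := by
      intro hmem
      obtain ⟨s, hs, hus⟩ := Finset.mem_biUnion.mp hmem
      exact hu (hAX s (hBA s hs hus))
    have h1 := ((h𝒞mem j c).mp hcj).1 u hub
    rw [h1, hc0]
    have : u ≠ x := fun he => hu (he ▸ hxX)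
    simp [this]
  have hVcard : q * (q-1).factorial ^ S.card ≤ V.card := by
    have hdisjV : ∀ j ∈ (Finset.univ : Finset (Fin q)), ∀ j' ∈ (Finset.univ : Finset (Fin q)),
        j ≠ j' → Disjoint (𝒞 j) (𝒞 j') := by
      intro j _ j' _ hne
      rw [Finset.disjoint_left]
      intro c hc hc'
      have h1 := ((h𝒞mem j c).mp hc).1 x hxB
      have h2 := ((h𝒞mem j' c).mp hc').1 x hxB
      rw [hc0] at h1 h2
      simp only [if_pos rfl] at h1 h2
      exact hne (h1.symm.trans h2)
    rw [hV, Finset.card_biUnion hdisjV]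
    have := Finset.card_nsmul_le_sum (Finset.univ : Finset (Fin q))
      (fun j => (𝒞 j).card) ((q-1).factorial ^ S.card) (fun j _ => h𝒞card j)
    simpa [smul_eq_mul] using this
  -- parts and families
  set P : (U → Fin q) → Fin q → Finset U := fun c j => X.filter (fun u => c u = j) with hP
  set F : (U → Fin q) → Finset (Finset U) := fun c => Finset.univ.image (P c) with hF
  have hPne : ∀ c ∈ V, ∀ j, (P c j).Nonempty := by
    intro c hc j
    obtain ⟨s₀, hs₀⟩ := hSne
    obtain ⟨u, huA, hcu⟩ := hVrainbow c hc s₀ hs₀ j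
    exact ⟨u, Finset.mem_filter.mpr ⟨hAX s₀ huA, hcu⟩⟩
  have hPdisj : ∀ c : U → Fin q, ∀ j j' : Fin q, j ≠ j' → Disjoint (P c j) (P c j') := by
    intro c j j' hne
    rw [Finset.disjoint_left]
    intro u hu hu'
    exact hne (((Finset.mem_filter.mp hu).2).symm.trans (Finset.mem_filter.mp hu').2)
  have hPinj : ∀ c ∈ V, Function.Injective (P c) := by
    intro c hc j j' h
    by_contra hne
    obtain ⟨u, hu⟩ := hPne c hc j
    exact (Finset.disjoint_left.mp (hPdisj c j j' hne)) hu (h ▸ hu)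
  have hnbhd : ∀ c ∈ V, ∀ j, {w : W | ∃ u ∈ P c j, r u w} = (↑S : Set W) := by
    intro c hc j
    ext w
    simp only [Set.mem_setOf_eq, Finset.coe_sort_coe, Finset.mem_coe]
    constructor
    · rintro ⟨u, huP, hru⟩
      exact (hXmem u).mp (Finset.mem_filter.mp huP).1 w hru
    · intro hw
      obtain ⟨u, huA, hcu⟩ := hVrainbow c hc w hw j
      exact ⟨u, Finset.mem_filter.mpr ⟨hAX w huA, hcu⟩, (Finset.mem_filter.mp huA).2⟩
  have hVne : V.Nonempty := by
    apply Finset.card_pos.mp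
    have hpos : 0 < q * (q-1).factorial ^ S.card :=
      Nat.mul_pos hq (Nat.pow_pos (Nat.factorial_pos _))
    omega
  constructor
  · -- first part: existence
    obtain ⟨c, hc⟩ := hVne
    refine ⟨fun i => P c i, fun i => hPne c hc i, ?_, ?_⟩
    · intro i j hij
      exact hPdisj c i j hij
    · intro i j
      rw [hnbhd c hc i, hnbhd c hc j]
  · -- second part: counting
    refine ⟨(↑S : Set W), ?_⟩
    have himgsub : ∀ G ∈ V.image F, G.card = q ∧
        (∀ A' ∈ G, A'.Nonempty) ∧
        (∀ A' ∈ G, ∀ B' ∈ G, A' ≠ B' → Disjoint A' B') ∧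
        ∀ A' ∈ G, {w : W | ∃ u ∈ A', r u w} = (↑S : Set W) := by
      intro G hG
      obtain ⟨c, hcV, rfl⟩ := Finset.mem_image.mp hG
      refine ⟨?_, ?_, ?_, ?_⟩
      · rw [hF]
        rw [Finset.card_image_of_injective _ (hPinj c hcV), Finset.card_univ, Fintype.card_fin]
      · intro A' hA'
        obtain ⟨j, -, rfl⟩ := Finset.mem_image.mp hA'
        exact hPne c hcV j
      · intro A' hA' B' hB' hne
        obtain ⟨j, -, rfl⟩ := Finset.mem_image.mp hA'
        obtain ⟨j', -, rfl⟩ := Finset.mem_image.mp hB'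
        exact hPdisj c j j' (fun h => hne (congrArg _ h))
      · intro A' hA'
        obtain ⟨j, -, rfl⟩ := Finset.mem_image.mp hA'
        exact hnbhd c hcV j
    -- fiber bound
    have hfiber : ∀ G ∈ V.image F, (V.filter (fun c => F c = G)).card ≤ q.factorial := by
      intro G hG
      obtain ⟨c₁, hc₁V, hc₁G⟩ := Finset.mem_image.mp hG
      choose uu huuP using fun j => hPne c₁ hc₁V j
      set Θ : (U → Fin q) → Fin q → Fin q := fun c' j => c' (uu j) with hΘ
      have key : ∀ c' ∈ V.filter (fun c => F c = G), ∀ j, P c₁ j = P c' (Θ c' j) := by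
        intro c' hc' j
        obtain ⟨hc'V, hc'G⟩ := Finset.mem_filter.mp hc'
        have hmem : P c₁ j ∈ F c' := by
          rw [hc'G, ← hc₁G, hF]
          exact Finset.mem_image_of_mem _ (Finset.mem_univ j)
        rw [hF] at hmem
        obtain ⟨j', -, hj'⟩ := Finset.mem_image.mp hmem
        have huu : uu j ∈ P c' j' := hj' ▸ huuP j
        have hc'uu : c' (uu j) = j' := (Finset.mem_filter.mp huu).2
        rw [hΘ]
        simp only
        rw [hc'uu, hj']
      have keyinj : ∀ c' ∈ V.filter (fun c => F c = G), Function.Injective (Θ c') := by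
        intro c' hc' j j' h
        apply hPinj c₁ hc₁V
        rw [key c' hc' j, key c' hc' j', h]
      have keyval : ∀ c' ∈ V.filter (fun c => F c = G), ∀ v ∈ X, c' v = Θ c' (c₁ v) := by
        intro c' hc' v hv
        have h1 : v ∈ P c₁ (c₁ v) := Finset.mem_filter.mpr ⟨hv, rfl⟩
        rw [key c' hc' (c₁ v)] at h1
        exact (Finset.mem_filter.mp h1).2
      have hmap : Set.InjOn (fun c' => Θ c')
          ↑(V.filter (fun c => F c = G)) := by
        intro c₁' h1 c₂' h2 he
        have h1' := Finset.mem_coe.mp h1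
        have h2' := Finset.mem_coe.mp h2
        funext v
        by_cases hv : v ∈ X
        · rw [keyval c₁' h1' v hv, keyval c₂' h2' v hv]
          exact congrFun he (c₁ v)
        · rw [hVoff c₁' (Finset.mem_of_mem_filter _ h1') v hv,
            hVoff c₂' (Finset.mem_of_mem_filter _ h2') v hv]
      have hsub2 : ∀ c' ∈ V.filter (fun c => F c = G),
          Θ c' ∈ (Finset.univ : Finset (Fin q → Fin q)).filter Function.Injective := by
        intro c' hc'
        exact Finset.mem_filter.mpr ⟨Finset.mem_univ _, keyinj c' hc'⟩
      have hcardinj :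
          ((Finset.univ : Finset (Fin q → Fin q)).filter Function.Injective).card
            = q.factorial := by
        rw [← Fintype.card_subtype]
        rw [Fintype.card_congr (Equiv.subtypeInjectiveEquivEmbedding (Fin q) (Fin q))]
        rw [Fintype.card_embedding_eq, Fintype.card_fin, Nat.descFactorial_self]
      calc (V.filter (fun c => F c = G)).card
          ≤ ((Finset.univ : Finset (Fin q → Fin q)).filter Function.Injective).card :=
            Finset.card_le_card_of_injOn _ hsub2 hmap
        _ = q.factorial := hcardinj
    have hVle : V.card ≤ q.factorial * (V.image F).card :=
      Finset.card_le_mul_card_image V q.factorial (fun G hG => hfiber G hG)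
    have hfact : q.factorial = q * (q - 1).factorial := by
      obtain ⟨m, rfl⟩ : ∃ m, q = m + 1 := ⟨q - 1, by omega⟩
      simp [Nat.factorial_succ]
    have hpow : (q-1).factorial ^ S.card
        = (q-1).factorial * (q-1).factorial ^ (S.card - 1) := by
      obtain ⟨m, hm⟩ : ∃ m, S.card = m + 1 := ⟨S.card - 1, by omega⟩
      rw [hm, pow_succ, mul_comm]
      simp
    have hmain : (q-1).factorial ^ (S.card - 1) ≤ (V.image F).card := by
      have h1 : q * ((q-1).factorial * (q-1).factorial ^ (S.card - 1))
          ≤ q * ((q-1).factorial * (V.image F).card) := by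
        calc q * ((q-1).factorial * (q-1).factorial ^ (S.card - 1))
            = q * (q-1).factorial ^ S.card := by rw [← hpow]
          _ ≤ V.card := hVcard
          _ ≤ q.factorial * (V.image F).card := hVle
          _ = q * ((q-1).factorial * (V.image F).card) := by rw [hfact, mul_assoc]
      have h2 := Nat.le_of_mul_le_mul_left h1 (by omega : 0 < q)
      exact Nat.le_of_mul_le_mul_left h2 (Nat.factorial_pos _)
    rw [Set.ncard_coe_finset]
    calc (q-1).factorial ^ (S.card - 1) ≤ (V.image F).card := hmain
      _ = (↑(V.image F) : Set (Finset (Finset U))).ncard := (Set.ncard_coe_finset _).symm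
      _ ≤ _ := Set.ncard_le_ncard (fun G hG => himgsub G (Finset.mem_coe.mp hG))
            (Set.toFinite _)
end

section
/- Genericity lemma for conic Tverberg partitions: let q ≥ 2 and let x_1, …, x_n be n points in (Fin (d+1) → ℝ) with n ≤ (d+1)(q-1), and suppose the points are generic in the sense that the family of all n(d+1) real coordinates (x_i)_k, for i ∈ {1, …, n} and k ∈ {1, …, d+1}, is linearly independent over ℚ. Then there is no max-plus conic Tverberg partition into q parts; that is, there do not exist q pairwise disjoint nonempty subsets S_1, …, S_q of {1, …, n} and real numbers λ_i such that the componentwise maxima max_{i ∈ S_1} (λ_i + x_i), …, max_{i ∈ S_q} (λ_i + x_i) all coincide. -/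
private lemma collapse_aux {m : ℕ} (c : ℝ) (u w : Fin m) (f : Fin m → ℝ) :
    ∑ i : Fin m, c * (((if i = u then (1:ℝ) else 0) - (if i = w then 1 else 0)) * f i)
      = c * (f u - f w) := by
  have h : ∀ i : Fin m, c * (((if i = u then (1:ℝ) else 0) - (if i = w then 1 else 0)) * f i)
      = (if i = u then c * f i else 0) - (if i = w then c * f i else 0) := by
    intro i; split_ifs <;> ring
  rw [Finset.sum_congr rfl (fun i _ => h i), Finset.sum_sub_distrib]
  simp [Finset.sum_ite_eq', mul_sub]

/-- Genericity lemma for conic Tverberg partitions: if `n ≤ (d+1)(q-1)` and the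
`n(d+1)` coordinates of the points `x 1, …, x n ∈ (Fin (d+1) → ℝ)` are linearly
independent over `ℚ`, then there is no max-plus conic Tverberg partition of the
points into `q` parts. -/
theorem maxPlus_conic_tverberg_generic_lower_bound (d q n : ℕ) (hq : q ≥ 2)
    (hn : n ≤ (d + 1) * (q - 1))
    (x : Fin n → (Fin (d + 1) → ℝ))
    (hgen : LinearIndependent ℚ (fun p : Fin n × Fin (d + 1) => x p.1 p.2)) :
    ∀ (S : Fin q → Finset (Fin n)) (hS : ∀ l, (S l).Nonempty),
      Pairwise (Function.onFun Disjoint S) →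
      ∀ lam : Fin n → ℝ,
        ¬ ∃ p : Fin (d + 1) → ℝ,
            ∀ l k, ((S l).sup' (hS l) fun i => lam i + x i k) = p k := by
  classical
  intro S hS hdisj lam hpex
  obtain ⟨p, hp⟩ := hpex
  have hn0 : 0 < n := (hS ⟨0, by omega⟩).choose.pos
  -- choose argmax indices
  have hmem : ∀ l k, ∃ i, i ∈ S l ∧ lam i + x i k = p k := by
    intro l k
    obtain ⟨i, hi, hEq⟩ := Finset.exists_mem_eq_sup' (hS l) (fun i => lam i + x i k)
    exact ⟨i, hi, by rw [← hEq]; exact hp l k⟩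
  choose ι hιm hιe using hmem
  have hql : ∀ l : Fin (q - 1), (l : ℕ) + 1 < q := fun l => by omega
  set l0 : Fin q := ⟨0, by omega⟩ with hl0
  set a : Fin (d + 1) → Fin n := fun k => ι l0 k with ha
  set b : Fin (d + 1) → Fin (q - 1) → Fin n := fun k l => ι ⟨(l : ℕ) + 1, hql l⟩ k with hb
  have hab : ∀ k l, b k l ≠ a k := by
    intro k l h
    have h' : ι (⟨(l : ℕ) + 1, hql l⟩ : Fin q) k = ι l0 k := h
    have hne : l0 ≠ (⟨(l : ℕ) + 1, hql l⟩ : Fin q) := by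
      simp [hl0, Fin.ext_iff]
    have hmem1 : ι l0 k ∈ S (⟨(l : ℕ) + 1, hql l⟩ : Fin q) := h' ▸ hιm _ k
    exact Finset.disjoint_left.mp (hdisj hne) (hιm l0 k) hmem1
  have hbb : ∀ k (l l' : Fin (q - 1)), b k l = b k l' → l = l' := by
    intro k l l' h
    by_contra hne
    have hne' : (⟨(l : ℕ) + 1, hql l⟩ : Fin q) ≠ ⟨(l' : ℕ) + 1, hql l'⟩ := by
      simp only [ne_eq, Fin.mk.injEq, add_left_inj]
      intro hc; exact hne (Fin.ext hc)
    have h' : ι (⟨(l : ℕ) + 1, hql l⟩ : Fin q) k = ι (⟨(l' : ℕ) + 1, hql l'⟩ : Fin q) k := h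
    have hmem1 : ι (⟨(l' : ℕ) + 1, hql l'⟩ : Fin q) k ∈ S (⟨(l : ℕ) + 1, hql l⟩ : Fin q) :=
      h' ▸ hιm _ k
    exact Finset.disjoint_left.mp (hdisj hne') hmem1 (hιm _ k)
  have key : ∀ k l, x (a k) k - x (b k l) k = lam (b k l) - lam (a k) := by
    intro k l
    have h1 := hιe l0 k
    have h2 := hιe (⟨(l : ℕ) + 1, hql l⟩ : Fin q) k
    have e1 : lam (a k) + x (a k) k = p k := h1
    have e2 : lam (b k l) + x (b k l) k = p k := h2
    linarith
  -- the family of indicator-difference vectors plus the all-ones vector is dependent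
  set v : (Fin (d + 1) × Fin (q - 1)) ⊕ Unit → (Fin n → ℚ) :=
    Sum.elim
      (fun e i => (if i = a e.1 then (1:ℚ) else 0) - (if i = b e.1 e.2 then 1 else 0))
      (fun _ _ => 1) with hv
  have hnotli : ¬ LinearIndependent ℚ v := by
    intro hli
    have hc := hli.fintype_card_le_finrank
    simp [Fintype.card_sum, Fintype.card_prod] at hc
    omega
  obtain ⟨t, hsum, e0, he0⟩ := Fintype.not_linearIndependent_iff.mp hnotli
  have hsum' : ∀ i : Fin n, ∑ e, t e * v e i = 0 := by
    intro i
    have := congrFun hsum i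
    simpa [Finset.sum_apply] using this
  -- the coefficient of the all-ones vector vanishes
  have hone : t (Sum.inr ()) = 0 := by
    have h0 : ∑ i : Fin n, ∑ e, t e * v e i = 0 := by simp [hsum']
    rw [Finset.sum_comm, Fintype.sum_sum_type] at h0
    have hinl : ∀ e : Fin (d + 1) × Fin (q - 1),
        ∑ i : Fin n, t (Sum.inl e) * v (Sum.inl e) i = 0 := by
      intro e
      rw [← Finset.mul_sum]
      have hz : ∑ i : Fin n, v (Sum.inl e) i = 0 := by
        simp [hv, Finset.sum_sub_distrib, Finset.sum_ite_eq']
      rw [hz, mul_zero]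
    rw [Finset.sum_congr rfl (fun e _ => hinl e)] at h0
    have h1 : n = 0 ∨ t (Sum.inr ()) = 0 := by
      simpa [hv] using h0
    exact h1.resolve_left hn0.ne'
  -- the nonzero coefficient is on an `inl`
  obtain ⟨⟨k0, le0⟩, hT0⟩ : ∃ e : Fin (d + 1) × Fin (q - 1), t (Sum.inl e) ≠ 0 := by
    rcases e0 with e | u
    · exact ⟨e, he0⟩
    · exact absurd (by cases u; exact hone) he0
  set T : Fin (d + 1) × Fin (q - 1) → ℚ := fun e => t (Sum.inl e) with hT
  -- componentwise relation among the T's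
  have hcomp : ∀ i : Fin n,
      ∑ e : Fin (d + 1) × Fin (q - 1),
        T e * ((if i = a e.1 then (1:ℚ) else 0) - (if i = b e.1 e.2 then 1 else 0)) = 0 := by
    intro i
    have h := hsum' i
    rw [Fintype.sum_sum_type] at h
    simpa [hv, hone, hT] using h
  -- the relation in ℝ
  have hcompR : ∀ i : Fin n,
      ∑ e : Fin (d + 1) × Fin (q - 1),
        (T e : ℝ) * ((if i = a e.1 then (1:ℝ) else 0) - (if i = b e.1 e.2 then 1 else 0)) = 0 := by
    intro i
    have h := congrArg (fun r : ℚ => (r : ℝ)) (hcomp i)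
    push_cast at h
    simpa [apply_ite (fun r : ℚ => (r : ℝ))] using h
  -- build the ℚ-relation among the coordinates
  set g : Fin n × Fin (d + 1) → ℚ := fun ik =>
    ∑ l : Fin (q - 1),
      T (ik.2, l) * ((if ik.1 = a ik.2 then (1:ℚ) else 0) - (if ik.1 = b ik.2 l then 1 else 0))
    with hg
  have hgR : ∀ ik : Fin n × Fin (d + 1), (g ik : ℝ) =
      ∑ l : Fin (q - 1),
        (T (ik.2, l) : ℝ) *
          ((if ik.1 = a ik.2 then (1:ℝ) else 0) - (if ik.1 = b ik.2 l then 1 else 0)) := by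
    intro ik
    rw [hg]
    push_cast
    simp [apply_ite (fun r : ℚ => (r : ℝ))]
  have hzero : ∑ ik : Fin n × Fin (d + 1), g ik • x ik.1 ik.2 = 0 := by
    have hcast : ∑ ik : Fin n × Fin (d + 1), g ik • x ik.1 ik.2
        = ∑ ik : Fin n × Fin (d + 1), (g ik : ℝ) * x ik.1 ik.2 :=
      Finset.sum_congr rfl (fun ik _ => Rat.smul_def _ _)
    rw [hcast]
    calc ∑ ik : Fin n × Fin (d + 1), (g ik : ℝ) * x ik.1 ik.2
        = ∑ i : Fin n, ∑ k : Fin (d + 1), ∑ l : Fin (q - 1),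
            (T (k, l) : ℝ) *
              (((if i = a k then (1:ℝ) else 0) - (if i = b k l then 1 else 0)) * x i k) := by
          rw [Fintype.sum_prod_type]
          refine Finset.sum_congr rfl fun i _ => Finset.sum_congr rfl fun k _ => ?_
          rw [hgR, Finset.sum_mul]
          exact Finset.sum_congr rfl fun l _ => by ring
      _ = ∑ k : Fin (d + 1), ∑ l : Fin (q - 1), ∑ i : Fin n,
            (T (k, l) : ℝ) *
              (((if i = a k then (1:ℝ) else 0) - (if i = b k l then 1 else 0)) * x i k) := by
          rw [Finset.sum_comm]
          exact Finset.sum_congr rfl fun k _ => Finset.sum_comm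
      _ = ∑ k : Fin (d + 1), ∑ l : Fin (q - 1),
            (T (k, l) : ℝ) * (lam (b k l) - lam (a k)) := by
          refine Finset.sum_congr rfl fun k _ => Finset.sum_congr rfl fun l _ => ?_
          rw [collapse_aux, key k l]
      _ = ∑ k : Fin (d + 1), ∑ l : Fin (q - 1), ∑ i : Fin n,
            -((T (k, l) : ℝ) *
              (((if i = a k then (1:ℝ) else 0) - (if i = b k l then 1 else 0)) * lam i)) := by
          refine Finset.sum_congr rfl fun k _ => Finset.sum_congr rfl fun l _ => ?_
          rw [Finset.sum_neg_distrib, collapse_aux (T (k, l) : ℝ) (a k) (b k l) lam]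
          ring
      _ = ∑ i : Fin n, -((∑ e : Fin (d + 1) × Fin (q - 1),
            (T e : ℝ) *
              ((if i = a e.1 then (1:ℝ) else 0) - (if i = b e.1 e.2 then 1 else 0))) * lam i) := by
          refine Eq.symm ?_
          calc ∑ i : Fin n, -((∑ e : Fin (d + 1) × Fin (q - 1),
                  (T e : ℝ) *
                    ((if i = a e.1 then (1:ℝ) else 0) - (if i = b e.1 e.2 then 1 else 0))) * lam i)
              = ∑ i : Fin n, ∑ e : Fin (d + 1) × Fin (q - 1),
                  -((T e : ℝ) *
                    (((if i = a e.1 then (1:ℝ) else 0) - (if i = b e.1 e.2 then 1 else 0)) * lam i)) := by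
                refine Finset.sum_congr rfl fun i _ => ?_
                rw [Finset.sum_neg_distrib, Finset.sum_mul]
                congr 1
                exact Finset.sum_congr rfl fun e _ => by ring
            _ = ∑ e : Fin (d + 1) × Fin (q - 1), ∑ i : Fin n,
                  -((T e : ℝ) *
                    (((if i = a e.1 then (1:ℝ) else 0) - (if i = b e.1 e.2 then 1 else 0)) * lam i)) :=
                Finset.sum_comm
            _ = ∑ k : Fin (d + 1), ∑ l : Fin (q - 1), ∑ i : Fin n,
                  -((T (k, l) : ℝ) *
                    (((if i = a k then (1:ℝ) else 0) - (if i = b k l then 1 else 0)) * lam i)) := by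
                rw [Fintype.sum_prod_type]
      _ = 0 := by
          refine Finset.sum_eq_zero fun i _ => ?_
          rw [hcompR i]
          ring
  -- genericity kills the relation
  have hg0 := Fintype.linearIndependent_iff.mp hgen g hzero (b k0 le0, k0)
  simp only [hg] at hg0
  have hsingle : ∀ l : Fin (q - 1), l ∈ Finset.univ → l ≠ le0 →
      T (k0, l) * ((if b k0 le0 = a k0 then (1:ℚ) else 0) - (if b k0 le0 = b k0 l then 1 else 0))
        = 0 := by
    intro l _ hl
    have h2 : b k0 le0 ≠ b k0 l := fun h => hl.symm (hbb k0 le0 l h)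
    simp [hab k0 le0, h2]
  rw [Finset.sum_eq_single le0 hsingle
      (fun h => absurd (Finset.mem_univ le0) h)] at hg0
  simp [hab k0 le0] at hg0
  exact hT0 hg0
end
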